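/- If T₁ is a self-dual l₁×l₁ kernel over GF(2) and T₂ is a self-dual l₂×l₂ kernel over GF(2), then their Kronecker product T₁⊗T₂ is a self-dual (l₁l₂)×(l₁l₂) kernel over GF(2). -/

import Mathlib

open Matrix

/-- Kronecker product of square matrices over GF(2), with row/column index
pairs ordered lexicographically: `(a, b)` corresponds to index `a * n + b`. -/
noncomputable def kron {m n : ℕ} (A : Matrix (Fin m) (Fin m) (ZMod 2))
    (B : Matrix (Fin n) (Fin n) (ZMod 2)) :
    Matrix (Fin (m * n)) (Fin (m * n)) (ZMod 2) :=
  Matrix.reindex finProdFinEquiv finProdFinEquiv (Matrix.kroneckerMap (· * ·) A B)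

/-- Kernel code `C_i(T)`: the span of rows `i, …, l-1` (0-indexed) of `T`,
i.e. of rows `g_{i+1}, …, g_l` in 1-indexed notation.  For `i = l` this is `{0}`. -/
def kernelCode {l : ℕ} (T : Matrix (Fin l) (Fin l) (ZMod 2)) (i : ℕ) :
    Submodule (ZMod 2) (Fin l → ZMod 2) :=
  Submodule.span (ZMod 2) {v | ∃ j : Fin l, i ≤ (j : ℕ) ∧ v = T j}

/-- The dual (orthogonal complement) of a subspace of `𝔽₂^l` with respect to
the standard dot product. -/
def dualCode {l : ℕ} (U : Submodule (ZMod 2) (Fin l → ZMod 2)) :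
    Submodule (ZMod 2) (Fin l → ZMod 2) where
  carrier := {v | ∀ u ∈ U, ∑ j, u j * v j = 0}
  zero_mem' := by intro u _; simp
  add_mem' := by
    intro a b ha hb u hu
    have : (∑ j, u j * (a + b) j) = (∑ j, u j * a j) + ∑ j, u j * b j := by
      simp [Pi.add_apply, mul_add, Finset.sum_add_distrib]
    rw [this, ha u hu, hb u hu, add_zero]
  smul_mem' := by
    intro c v hv u hu
    have : (∑ j, u j * (c • v) j) = c * ∑ j, u j * v j := by
      simp [Pi.smul_apply, Finset.mul_sum, mul_left_comm]
    rw [this, hv u hu, mul_zero]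

/-- An `l × l` kernel `T` over GF(2) is self-dual if `C_i(T) = C_{l-i}(T)^⊥`
for all `0 ≤ i ≤ l`. -/
def SelfDualKernel {l : ℕ} (T : Matrix (Fin l) (Fin l) (ZMod 2)) : Prop :=
  ∀ i ≤ l, kernelCode T i = dualCode (kernelCode T (l - i))

noncomputable def dotForm (l : ℕ) : LinearMap.BilinForm (ZMod 2) (Fin l → ZMod 2) :=
  LinearMap.mk₂ (ZMod 2) (fun u v => ∑ j, u j * v j)
    (by intro u u' v; simp [add_mul, Finset.sum_add_distrib])
    (by intro c u v; simp [Finset.mul_sum, mul_assoc])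
    (by intro u v v'; simp [mul_add, Finset.sum_add_distrib])
    (by intro c u v; simp [Finset.mul_sum]; ring_nf; simp [mul_comm, mul_left_comm])

lemma dotForm_apply {l : ℕ} (u v : Fin l → ZMod 2) : dotForm l u v = ∑ j, u j * v j := rfl

lemma dotForm_symm {l : ℕ} (u v : Fin l → ZMod 2) : dotForm l u v = dotForm l v u := by
  simp [dotForm_apply, mul_comm]

lemma dotForm_refl {l : ℕ} : (dotForm l).IsRefl := fun x y h => by rwa [dotForm_symm]

lemma dotForm_nondeg {l : ℕ} : (dotForm l).Nondegenerate := by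
  refine ⟨fun v h => ?_, fun v h => ?_⟩ <;>
  funext j <;>
  have := h (Pi.single j 1) <;>
  simpa [dotForm_apply, Pi.single_apply] using this

lemma mem_dualCode {l : ℕ} {U : Submodule (ZMod 2) (Fin l → ZMod 2)} {v : Fin l → ZMod 2} :
    v ∈ dualCode U ↔ ∀ u ∈ U, ∑ j, u j * v j = 0 := Iff.rfl

lemma dualCode_eq_orthogonal {l : ℕ} (U : Submodule (ZMod 2) (Fin l → ZMod 2)) :
    dualCode U = (dotForm l).orthogonal U := by
  ext v
  rw [mem_dualCode, LinearMap.BilinForm.mem_orthogonal_iff]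
  simp [LinearMap.BilinForm.IsOrtho, dotForm_apply]

lemma finrank_dualCode {l : ℕ} (U : Submodule (ZMod 2) (Fin l → ZMod 2)) :
    Module.finrank (ZMod 2) (dualCode U) = l - Module.finrank (ZMod 2) U := by
  rw [dualCode_eq_orthogonal, LinearMap.BilinForm.finrank_orthogonal dotForm_nondeg,
    Module.finrank_fin_fun]

lemma mem_dualCode_span {l : ℕ} {S : Set (Fin l → ZMod 2)} {v : Fin l → ZMod 2}
    (h : ∀ u ∈ S, ∑ j, u j * v j = 0) : v ∈ dualCode (Submodule.span (ZMod 2) S) := by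
  rw [mem_dualCode]
  have hle : Submodule.span (ZMod 2) S ≤ LinearMap.ker ((dotForm l).flip v) :=
    Submodule.span_le.2 (fun u hu => LinearMap.mem_ker.2 (h u hu))
  intro u hu
  simpa [dotForm_apply] using hle hu

def Gram {l : ℕ} (T : Matrix (Fin l) (Fin l) (ZMod 2)) : Prop :=
  (∀ a b : Fin l, l ≤ (a : ℕ) + (b : ℕ) → ∑ j, T a j * T b j = 0) ∧
  (∀ a b : Fin l, (a : ℕ) + (b : ℕ) + 1 = l → ∑ j, T a j * T b j = 1)

lemma kernelCode_eq_span_image {l : ℕ} (T : Matrix (Fin l) (Fin l) (ZMod 2)) (i : ℕ) :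
    kernelCode T i =
      Submodule.span (ZMod 2) ((fun j : Fin l => T j) '' {j : Fin l | i ≤ (j : ℕ)}) := by
  unfold kernelCode
  congr 1
  ext v
  constructor
  · rintro ⟨j, hj, rfl⟩; exact ⟨j, hj, rfl⟩
  · rintro ⟨j, hj, rfl⟩; exact ⟨j, hj, rfl⟩

/-- The subtype of rows with index ≥ i is equivalent to `Fin (l - i)`. -/
def rowEquiv (l i : ℕ) (hi : i ≤ l) : {j : Fin l // i ≤ (j : ℕ)} ≃ Fin (l - i) where
  toFun j := ⟨(j.1 : ℕ) - i, by have := j.1.2; have := j.2; omega⟩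
  invFun k := ⟨⟨(k : ℕ) + i, by have := k.2; omega⟩, Nat.le_add_left i (k : ℕ)⟩
  left_inv j := by
    apply Subtype.ext
    apply Fin.ext
    have := j.2
    simp
    omega
  right_inv k := by
    apply Fin.ext
    simp

lemma finrank_kernelCode {l : ℕ} {T : Matrix (Fin l) (Fin l) (ZMod 2)}
    (hli : LinearIndependent (ZMod 2) (fun j : Fin l => T j)) {i : ℕ} (hi : i ≤ l) :
    Module.finrank (ZMod 2) (kernelCode T i) = l - i := by
  rw [kernelCode_eq_span_image, Set.image_eq_range]
  have h2 : LinearIndependent (ZMod 2) (fun x : {j : Fin l | i ≤ (j : ℕ)} => T x.1) :=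
    hli.comp Subtype.val Subtype.val_injective
  rw [finrank_span_eq_card h2]
  rw [show Fintype.card {j : Fin l | i ≤ (j : ℕ)} = l - i from (Fintype.card_congr (rowEquiv l i hi)).trans (Fintype.card_fin _)]

lemma Gram.linearIndependent_rows {l : ℕ} {T : Matrix (Fin l) (Fin l) (ZMod 2)}
    (hG : Gram T) : LinearIndependent (ZMod 2) (fun a : Fin l => T a) := by
  rw [Fintype.linearIndependent_iff]
  intro g hg
  by_contra hcon
  push_neg at hcon
  obtain ⟨i₀, hi₀⟩ := hcon
  set s : Finset (Fin l) := Finset.univ.filter (fun a => g a ≠ 0) with hs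
  have hne : s.Nonempty := ⟨i₀, by simp [hs, hi₀]⟩
  set j₀ := s.min' hne with hj₀
  have hj₀s : j₀ ∈ s := s.min'_mem hne
  have hgj₀ : g j₀ ≠ 0 := by simpa [hs] using hj₀s
  -- the row with complementary index
  have hl : 0 < l := j₀.pos
  set b : Fin l := ⟨l - 1 - (j₀ : ℕ), by omega⟩ with hb
  have hrow : ∀ j, (∑ a, g a * T a j) = 0 := by
    intro j
    have := congrFun hg j
    simpa [Finset.sum_apply] using this
  have key : (∑ a, g a * ∑ j, T a j * T b j) = 0 := by
    calc (∑ a, g a * ∑ j, T a j * T b j)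
        = ∑ a, ∑ j, g a * T a j * T b j := by
          simp [Finset.mul_sum, mul_assoc]
      _ = ∑ j, ∑ a, g a * T a j * T b j := Finset.sum_comm
      _ = ∑ j, (∑ a, g a * T a j) * T b j := by
          simp [Finset.sum_mul]
      _ = 0 := by simp [hrow]
  rw [Finset.sum_eq_single j₀] at key
  · rw [hG.2 j₀ b (by simp [hb]; omega), mul_one] at key
    exact hgj₀ key
  · intro a _ ha
    by_cases hga : g a = 0
    · rw [hga, zero_mul]
    · have has : a ∈ s := by simp [hs, hga]
      have : j₀ ≤ a := s.min'_le a has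
      have hlt : (j₀ : ℕ) < (a : ℕ) := by
        rcases lt_or_eq_of_le this with h | h
        · exact h
        · exact absurd h.symm ha
      rw [hG.1 a b (by simp [hb]; omega), mul_zero]
  · intro h
    exact absurd (Finset.mem_univ j₀) h

lemma Gram.selfDual {l : ℕ} {T : Matrix (Fin l) (Fin l) (ZMod 2)}
    (hG : Gram T) : SelfDualKernel T := by
  intro i hi
  have hli := hG.linearIndependent_rows
  have hle : kernelCode T i ≤ dualCode (kernelCode T (l - i)) := by
    rw [kernelCode]
    apply Submodule.span_le.2
    rintro v ⟨j, hj, rfl⟩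
    apply mem_dualCode_span
    rintro u ⟨j', hj', rfl⟩
    exact hG.1 j' j (by omega)
  refine Submodule.eq_of_le_of_finrank_le hle ?_
  rw [finrank_dualCode, finrank_kernelCode hli hi, finrank_kernelCode hli (Nat.sub_le l i)]
  omega

lemma SelfDualKernel.dot_zero {l : ℕ} {T : Matrix (Fin l) (Fin l) (ZMod 2)}
    (hsd : SelfDualKernel T) (a b : Fin l) (hab : l ≤ (a : ℕ) + (b : ℕ)) :
    ∑ j, T a j * T b j = 0 := by
  have h := hsd a (le_of_lt a.2)
  have hTa : T a ∈ kernelCode T (a : ℕ) :=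
    Submodule.subset_span ⟨a, le_refl _, rfl⟩
  rw [h] at hTa
  have hTb : T b ∈ kernelCode T (l - (a : ℕ)) :=
    Submodule.subset_span ⟨b, by omega, rfl⟩
  have := (mem_dualCode.1 hTa) (T b) hTb
  calc (∑ j, T a j * T b j) = ∑ j, T b j * T a j := by simp [mul_comm]
    _ = 0 := this

lemma SelfDualKernel.linearIndependent_rows {l : ℕ} {T : Matrix (Fin l) (Fin l) (ZMod 2)}
    (hsd : SelfDualKernel T) : LinearIndependent (ZMod 2) (fun a : Fin l => T a) := by
  have h0 := hsd 0 (Nat.zero_le l)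
  have hker_l : kernelCode T (l - 0) = ⊥ := by
    rw [Nat.sub_zero, kernelCode]
    convert Submodule.span_empty
    ext v
    simp only [Set.mem_setOf_eq, Set.mem_empty_iff_false, iff_false]
    rintro ⟨j, hj, -⟩
    exact absurd j.2 (by omega)
  have hdual_bot : dualCode (⊥ : Submodule (ZMod 2) (Fin l → ZMod 2)) = ⊤ := by
    ext v
    simp only [Submodule.mem_top, iff_true, mem_dualCode]
    rintro u hu
    rw [Submodule.mem_bot] at hu
    simp [hu]
  have htop : kernelCode T 0 = ⊤ := by rw [h0, hker_l, hdual_bot]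
  apply linearIndependent_of_top_le_span_of_card_eq_finrank
  · rw [show Submodule.span (ZMod 2) (Set.range fun a : Fin l => T a) = kernelCode T 0 by
      rw [kernelCode]; congr 1; ext v; constructor
      · rintro ⟨j, rfl⟩; exact ⟨j, Nat.zero_le _, rfl⟩
      · rintro ⟨j, -, rfl⟩; exact ⟨j, rfl⟩]
    rw [htop]
  · rw [Fintype.card_fin, Module.finrank_fin_fun]

lemma SelfDualKernel.gram {l : ℕ} {T : Matrix (Fin l) (Fin l) (ZMod 2)}
    (hsd : SelfDualKernel T) : Gram T := by
  refine ⟨fun a b hab => hsd.dot_zero a b hab, ?_⟩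
  intro a b hab
  by_contra hne
  have hdot0 : (∑ j, T a j * T b j) = 0 := by
    have h2 : ∀ x : ZMod 2, x ≠ 1 → x = 0 := by decide
    exact h2 _ hne
  have hli := hsd.linearIndependent_rows
  have hbval : (b : ℕ) = l - 1 - (a : ℕ) := by omega
  have ha1 := hsd ((a : ℕ) + 1) (by omega)
  have hmem : T a ∈ dualCode (kernelCode T (l - ((a : ℕ) + 1))) := by
    apply mem_dualCode_span
    rintro u ⟨j', hj', rfl⟩
    rcases Nat.lt_or_ge (j' : ℕ) ((b : ℕ) + 1) with h | h
    · have : j' = b := by apply Fin.ext; omega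
      subst this
      calc (∑ j, T j' j * T a j) = ∑ j, T a j * T j' j := by simp [mul_comm]
        _ = 0 := hdot0
    · exact hsd.dot_zero j' a (by omega)
  rw [← ha1] at hmem
  rw [kernelCode_eq_span_image] at hmem
  exact hli.notMem_span_image (by simp : a ∉ {j : Fin l | (a : ℕ) + 1 ≤ (j : ℕ)}) hmem

lemma kron_dot {m n : ℕ} (A : Matrix (Fin m) (Fin m) (ZMod 2))
    (B : Matrix (Fin n) (Fin n) (ZMod 2)) (k k' : Fin (m * n)) :
    (∑ j, kron A B k j * kron A B k' j) =
      (∑ c, A (finProdFinEquiv.symm k).1 c * A (finProdFinEquiv.symm k').1 c) *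
      (∑ d, B (finProdFinEquiv.symm k).2 d * B (finProdFinEquiv.symm k').2 d) := by
  rw [← Equiv.sum_comp (finProdFinEquiv : Fin m × Fin n ≃ Fin (m * n))
      (fun j => kron A B k j * kron A B k' j), Fintype.sum_prod_type, Finset.sum_mul_sum]
  apply Finset.sum_congr rfl
  intro c _
  apply Finset.sum_congr rfl
  intro d _
  simp only [kron, Matrix.reindex_apply, Matrix.submatrix_apply, Equiv.symm_apply_apply,
    Matrix.kroneckerMap_apply]
  ring

lemma kron_arith₁ {m n a a' b b' : ℕ} (hb : b < n) (hb' : b' < n)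
    (h : m * n ≤ (b + n * a) + (b' + n * a')) : m ≤ a + a' ∨ n ≤ b + b' := by
  by_cases hm : m ≤ a + a'
  · exact Or.inl hm
  · right
    push_neg at hm
    have h1 : n * (a + a') + n ≤ n * m := by
      have h0 := Nat.mul_le_mul_left n (Nat.succ_le_of_lt hm)
      calc n * (a + a') + n = n * (a + a' + 1) := by ring
        _ ≤ n * m := h0
    have h2 : b + n * a + (b' + n * a') = b + b' + n * (a + a') := by ring
    rw [h2, Nat.mul_comm m n] at h
    linarith

lemma kron_arith₂ {m n a a' b b' : ℕ} (hb : b < n) (hb' : b' < n)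
    (h : (b + n * a) + (b' + n * a') + 1 = m * n) :
    a + a' + 1 = m ∧ b + b' + 1 = n := by
  have hn : 0 < n := lt_of_le_of_lt (Nat.zero_le b) hb
  have h2 : b + b' + n * (a + a') + 1 = n * m := by
    rw [Nat.mul_comm n m, ← h]; ring
  have hle : a + a' + 1 ≤ m := by
    by_contra hc
    push_neg at hc
    have h3 : n * m ≤ n * (a + a') := Nat.mul_le_mul_left n (by omega)
    linarith
  have hge : ¬(a + a' + 2 ≤ m) := by
    intro hc
    have h4 : n * (a + a') + 2 * n ≤ n * m := by
      have h5 := Nat.mul_le_mul_left n hc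
      calc n * (a + a') + 2 * n = n * (a + a' + 2) := by ring
        _ ≤ n * m := h5
    linarith
  have ham : a + a' + 1 = m := by omega
  refine ⟨ham, ?_⟩
  have h4 : n * m = n * (a + a') + n := by rw [← ham]; ring
  linarith

lemma gram_kron {m n : ℕ} {A : Matrix (Fin m) (Fin m) (ZMod 2)}
    {B : Matrix (Fin n) (Fin n) (ZMod 2)} (hA : Gram A) (hB : Gram B) :
    Gram (kron A B) := by
  have hval : ∀ k : Fin (m * n),
      (k : ℕ) = ((finProdFinEquiv.symm k).2 : ℕ) + n * ((finProdFinEquiv.symm k).1 : ℕ) := by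
    intro k
    conv_lhs => rw [← Equiv.apply_symm_apply finProdFinEquiv k]
    simp
  constructor
  · intro k k' hkk
    rw [kron_dot]
    rw [hval k, hval k'] at hkk
    rcases kron_arith₁ (finProdFinEquiv.symm k).2.2 (finProdFinEquiv.symm k').2.2 hkk with h | h
    · rw [hA.1 _ _ h, zero_mul]
    · rw [hB.1 _ _ h, mul_zero]
  · intro k k' hkk
    rw [kron_dot]
    rw [hval k, hval k'] at hkk
    obtain ⟨h1, h2⟩ := kron_arith₂ (finProdFinEquiv.symm k).2.2 (finProdFinEquiv.symm k').2.2 hkk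
    rw [hA.2 _ _ h1, hB.2 _ _ h2, one_mul]

theorem selfDualKernel_kron {l₁ l₂ : ℕ}
    (T₁ : Matrix (Fin l₁) (Fin l₁) (ZMod 2)) (T₂ : Matrix (Fin l₂) (Fin l₂) (ZMod 2))
    (h₁ : SelfDualKernel T₁) (h₂ : SelfDualKernel T₂) :
    SelfDualKernel (kron T₁ T₂) :=
  (gram_kron h₁.gram h₂.gram).selfDual
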